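/- Let G be a definition for a set Q ⊆ σ of atoms. For any set J of atoms disjoint from Q, there exists a unique Q-stable model I of G such that I \ Q = J. -/
import Mathlib


/-- Infinitary propositional formulas over signature `σ`:
atoms, conjunctions and disjunctions of (index-)sets of formulas, implication. -/
inductive Formula (σ : Type) : Type 1
  | atom : σ → Formula σ
  | conj : (ι : Type) → (ι → Formula σ) → Formula σ
  | disj : (ι : Type) → (ι → Formula σ) → Formula σ
  | imp : Formula σ → Formula σ → Formula σ

namespace Formula

variable {σ : Type}

/-- `⊥` is the empty disjunction. -/
def bot : Formula σ := Formula.disj Empty (fun e => e.elim)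

/-- Binary conjunction `F ∧ G`. -/
def and (F G : Formula σ) : Formula σ := Formula.conj Bool (fun b => if b then F else G)

/-- Binary disjunction `F ∨ G`. -/
def or (F G : Formula σ) : Formula σ := Formula.disj Bool (fun b => if b then F else G)

/-- Negation `¬F` abbreviates `F → ⊥`. -/
def neg (F : Formula σ) : Formula σ := Formula.imp F bot

/-- Conjunction of a set of atoms. -/
def conjAtoms (S : Set σ) : Formula σ := Formula.conj S (fun p => Formula.atom p.val)

/-- Satisfaction of an infinitary formula by an interpretation `I ⊆ σ`. -/
def Sat (I : Set σ) : Formula σ → Prop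
  | .atom p => p ∈ I
  | .conj _ f => ∀ i, Sat I (f i)
  | .disj _ f => ∃ i, Sat I (f i)
  | .imp F G => Sat I F → Sat I G

open Classical in
/-- The reduct `F^I`. -/
noncomputable def reduct (I : Set σ) : Formula σ → Formula σ
  | .atom p => if p ∈ I then Formula.atom p else bot
  | .conj ι f => Formula.conj ι (fun i => reduct I (f i))
  | .disj ι f => Formula.disj ι (fun i => reduct I (f i))
  | .imp F G => if Sat I (Formula.imp F G) then Formula.imp (reduct I F) (reduct I G) else bot

/-- `I` is an `A`-stable model of `F`: `I` is minimal w.r.t. `≤_A`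
(`J ≤_A I` iff `J ⊆ I` and `I \ J ⊆ A`) among interpretations satisfying `F^I`. -/
def AStable (A : Set σ) (I : Set σ) (F : Formula σ) : Prop :=
  Sat I (reduct I F) ∧ ∀ J : Set σ, J ⊆ I → I \ J ⊆ A → Sat J (reduct I F) → J = I

/-- A stable model is a `σ`-stable model. -/
def Stable (I : Set σ) (F : Formula σ) : Prop := AStable Set.univ I F

/-- The strictly positive atoms `P(F)`. -/
def spos : Formula σ → Set σ
  | .atom p => {p}
  | .conj _ f => ⋃ i, spos (f i)
  | .disj _ f => ⋃ i, spos (f i)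
  | .imp _ H => spos H

/-- `F` is (syntactically) the formula `⊥`, i.e. an empty disjunction. -/
def IsBot : Formula σ → Prop
  | .disj ι _ => IsEmpty ι
  | _ => False

open Classical in
mutual
/-- Positive nonnegated atoms `Pnn(F)`. -/
noncomputable def pnn : Formula σ → Set σ
  | .atom p => {p}
  | .conj _ f => ⋃ i, pnn (f i)
  | .disj _ f => ⋃ i, pnn (f i)
  | .imp G H => if IsBot H then ∅ else nnn G ∪ pnn H

/-- Negative nonnegated atoms `Nnn(F)`. -/
noncomputable def nnn : Formula σ → Set σ
  | .atom _ => ∅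
  | .conj _ f => ⋃ i, nnn (f i)
  | .disj _ f => ⋃ i, nnn (f i)
  | .imp G H => if IsBot H then ∅ else pnn G ∪ nnn H
end

/-- The rules of a formula, as antecedent/consequent pairs. -/
def rules : Formula σ → Set (Formula σ × Formula σ)
  | .atom _ => ∅
  | .conj _ f => ⋃ i, rules (f i)
  | .disj _ f => ⋃ i, rules (f i)
  | .imp G H => insert (G, H) (rules H)

/-- Edge relation of the positive dependency graph `DG_A[F]` (vertex set `A`). -/
noncomputable def DGEdge (F : Formula σ) (A : Set σ) (p q : σ) : Prop :=
  p ∈ A ∧ q ∈ A ∧ ∃ R ∈ rules F, p ∈ spos R.2 ∧ q ∈ pnn R.1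

/-- The atoms occurring in a formula. -/
def atoms : Formula σ → Set σ
  | .atom p => {p}
  | .conj _ f => ⋃ i, atoms (f i)
  | .disj _ f => ⋃ i, atoms (f i)
  | .imp G H => atoms G ∪ atoms H

/-- `G` is a definition for the set `Q` of atoms: a conjunction of formulas
`H ∧ C^∧ → q` with `q ∈ Q`, `C ⊆ Q`, and no atom of `Q` occurring in `H`. -/
def IsDefinition (Q : Set σ) (G : Formula σ) : Prop :=
  ∃ (ι : Type) (g : ι → Formula σ), G = Formula.conj ι g ∧
    ∀ i, ∃ (H : Formula σ) (C : Set σ) (q : σ),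
      q ∈ Q ∧ C ⊆ Q ∧ (∀ p ∈ Q, p ∉ atoms H) ∧
      g i = Formula.imp (Formula.and H (conjAtoms C)) (Formula.atom q)

end Formula

section Graph

variable {V : Type*}

/-- An infinite walk in the directed graph with edge relation `E`. -/
def IsInfWalk (E : V → V → Prop) (w : ℕ → V) : Prop := ∀ i, E (w i) (w (i + 1))

/-- The partition `{P₁, P₂}` is infinitely separable: every infinite walk
visits `P₁` or `P₂` only finitely often. -/
def InfSeparable (E : V → V → Prop) (P1 P2 : Set V) : Prop :=
  ∀ w : ℕ → V, IsInfWalk E w → {i | w i ∈ P1}.Finite ∨ {i | w i ∈ P2}.Finite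

/-- `u` and `v` are in the same strongly connected component:
each is reachable from the other. -/
def SameSCC (E : V → V → Prop) (u v : V) : Prop :=
  Relation.ReflTransGen E u v ∧ Relation.ReflTransGen E v u

/-- The partition `{P₁, P₂}` is separable: every strongly connected
component is contained in `P₁` or in `P₂`. -/
def Separable (E : V → V → Prop) (P1 P2 : Set V) : Prop :=
  ∀ u v, SameSCC E u v → ((u ∈ P1 ∧ v ∈ P1) ∨ (u ∈ P2 ∧ v ∈ P2))

end Graph

namespace Formula

variable {σ : Type}

theorem aux_not_sat_bot {I : Set σ} : ¬ Sat I (bot (σ := σ)) := fun ⟨e, _⟩ => e.elim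

theorem aux_sat_congr {I J : Set σ} {F : Formula σ}
    (h : ∀ p ∈ atoms F, (p ∈ I ↔ p ∈ J)) : Sat I F ↔ Sat J F := by
  induction F with
  | atom p => exact h p (by simp [atoms])
  | conj ι f ih =>
    exact forall_congr' fun i => ih i fun p hp => h p (Set.mem_iUnion.mpr ⟨i, hp⟩)
  | disj ι f ih =>
    exact exists_congr fun i => ih i fun p hp => h p (Set.mem_iUnion.mpr ⟨i, hp⟩)
  | imp F G ihF ihG =>
    exact imp_congr (ihF fun p hp => h p (Or.inl hp)) (ihG fun p hp => h p (Or.inr hp))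

theorem aux_sat_reduct {I K : Set σ} {F : Formula σ}
    (h : ∀ p ∈ atoms F, (p ∈ K ↔ p ∈ I)) : Sat K (reduct I F) ↔ Sat I F := by
  induction F with
  | atom p =>
    by_cases hp : p ∈ I
    · simpa [reduct, hp, Sat] using h p (by simp [atoms])
    · simp [reduct, hp, Sat, aux_not_sat_bot]
  | conj ι f ih =>
    simp only [reduct, Sat]
    exact forall_congr' fun i => ih i fun p hp => h p (Set.mem_iUnion.mpr ⟨i, hp⟩)
  | disj ι f ih =>
    simp only [reduct, Sat]
    exact exists_congr fun i => ih i fun p hp => h p (Set.mem_iUnion.mpr ⟨i, hp⟩)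
  | imp F G ihF ihG =>
    by_cases hFG : Sat I (Formula.imp F G)
    · have : reduct I (Formula.imp F G) = Formula.imp (reduct I F) (reduct I G) := by
        simp only [reduct]; rw [if_pos hFG]
      rw [this]
      show (Sat K (reduct I F) → Sat K (reduct I G)) ↔ _
      rw [ihF fun p hp => h p (Or.inl hp), ihG fun p hp => h p (Or.inr hp)]
      exact ⟨fun hh => hh, fun hh => hh⟩
    · have : reduct I (Formula.imp F G) = bot := by
        simp only [reduct]; rw [if_neg hFG]
      rw [this]
      exact iff_of_false aux_not_sat_bot hFG

theorem aux_sat_rule {I : Set σ} {H : Formula σ} {C : Set σ} {q : σ} :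
    Sat I (Formula.imp (Formula.and H (conjAtoms C)) (Formula.atom q)) ↔
      (Sat I H → C ⊆ I → q ∈ I) := by
  simp only [Sat, and, conjAtoms]
  constructor
  · intro hh h1 h2
    exact hh fun b => by cases b <;> simp [Sat, h1] <;> exact fun p hp => h2 hp
  · intro hh h1
    exact hh (by simpa [Sat] using h1 true) (fun p hp => by simpa [Sat, hp] using h1 false ⟨p, hp⟩)

theorem aux_sat_reduct_rule {I K : Set σ} (hK : K ⊆ I) {H : Formula σ} {C : Set σ} {q : σ}
    (hH : ∀ p ∈ atoms H, (p ∈ K ↔ p ∈ I))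
    (hSat : Sat I (Formula.imp (Formula.and H (conjAtoms C)) (Formula.atom q))) :
    Sat K (reduct I (Formula.imp (Formula.and H (conjAtoms C)) (Formula.atom q))) ↔
      (Sat I H → C ⊆ K → q ∈ K) := by
  have hred : reduct I (Formula.imp (Formula.and H (conjAtoms C)) (Formula.atom q)) =
      Formula.imp (reduct I (Formula.and H (conjAtoms C))) (reduct I (Formula.atom q)) := by
    simp only [reduct]; rw [if_pos hSat]
  rw [hred]
  show (Sat K _ → Sat K _) ↔ _
  have hbody : Sat K (reduct I (Formula.and H (conjAtoms C))) ↔ (Sat I H ∧ C ⊆ K) := by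
    simp only [and, conjAtoms, reduct, Sat]
    constructor
    · intro hh
      refine ⟨(aux_sat_reduct hH).mp (by simpa using hh true), fun p hp => ?_⟩
      have := hh false
      simp only [if_neg Bool.false_ne_true] at this
      have := this ⟨p, hp⟩
      by_cases hpI : p ∈ I
      · simpa [reduct, hpI, Sat] using this
      · exact absurd (by simpa [reduct, hpI] using this) aux_not_sat_bot
    · rintro ⟨h1, h2⟩ b
      cases b
      · intro ⟨p, hp⟩
        have hpI : p ∈ I := hK (h2 hp)
        simp [reduct, hpI, Sat]
        exact h2 hp
      · simpa using (aux_sat_reduct hH).mpr h1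
  have hq : Sat K (reduct I (Formula.atom q)) ↔ q ∈ K := by
    by_cases hqI : q ∈ I
    · simp [reduct, hqI, Sat]
    · simp only [reduct, hqI, if_false]
      exact iff_of_false aux_not_sat_bot fun hh => hqI (hK hh)
  rw [hbody, hq]
  exact ⟨fun hh h1 h2 => hh ⟨h1, h2⟩, fun hh ⟨h1, h2⟩ => hh h1 h2⟩

end Formula

/-- if `G` is a definition for `Q` and `J` is disjoint from `Q`,
there is a unique `Q`-stable model `I` of `G` with `I \ Q = J`. -/
theorem exists_unique_qstable_of_definition {σ : Type} (Q : Set σ)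
    (G : Formula σ) (hdef : Formula.IsDefinition Q G) (J : Set σ)
    (hJ : Disjoint J Q) :
    ∃! I : Set σ, Formula.AStable Q I G ∧ I \ Q = J := by
  classical
  obtain ⟨ι, g, rfl, hi⟩ := hdef
  choose H C q hqQ hCQ hHQ hgi using hi
  -- the least fixpoint over Q relative to J
  set M : Set σ :=
    {p | ∀ S : Set σ, S ⊆ Q → (∀ i, Formula.Sat J (H i) → C i ⊆ S → q i ∈ S) → p ∈ S}
    with hMdef
  have hMQ : M ⊆ Q := fun p hp => hp Q le_rfl (fun i _ _ => hqQ i)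
  have hMclosed : ∀ i, Formula.Sat J (H i) → C i ⊆ M → q i ∈ M := by
    intro i h1 h2 S hSQ hScl
    exact hScl i h1 (fun p hp => h2 hp S hSQ hScl)
  have hMmin : ∀ S : Set σ, S ⊆ Q → (∀ i, Formula.Sat J (H i) → C i ⊆ S → q i ∈ S) →
      M ⊆ S := fun S h1 h2 p hp => hp S h1 h2
  -- basic facts used repeatedly
  have key : ∀ I : Set σ, I \ Q = J →
      (Formula.AStable Q I (Formula.conj ι g) ↔ I = J ∪ M) := by
    intro I hIQ
    have hJI : J ⊆ I := by
      rw [← hIQ]; exact Set.diff_subset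
    have hoffQ : ∀ p, p ∉ Q → (p ∈ I ↔ p ∈ J) := by
      intro p hp
      rw [← hIQ]
      exact ⟨fun h => ⟨h, hp⟩, fun h => h.1⟩
    have hagree : ∀ i, ∀ p ∈ Formula.atoms (H i), (p ∈ I ↔ p ∈ J) := by
      intro i p hp
      by_cases hpQ : p ∈ Q
      · exact absurd hp (hHQ i p hpQ)
      · exact hoffQ p hpQ
    have hsatG : Formula.Sat I (Formula.conj ι g) ↔
        (∀ i, Formula.Sat J (H i) → C i ⊆ I → q i ∈ I) := by
      show (∀ i, Formula.Sat I (g i)) ↔ _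
      refine forall_congr' fun i => ?_
      rw [hgi i, Formula.aux_sat_rule]
      rw [Formula.aux_sat_congr (hagree i)]
    -- characterization of reduct satisfaction for subinterpretations
    have hredchar : ∀ K : Set σ, K ⊆ I → I \ K ⊆ Q → Formula.Sat I (Formula.conj ι g) →
        (Formula.Sat K (Formula.reduct I (Formula.conj ι g)) ↔
          (∀ i, Formula.Sat J (H i) → C i ⊆ K → q i ∈ K)) := by
      intro K hKI hIK hsat
      have hKH : ∀ i, ∀ p ∈ Formula.atoms (H i), (p ∈ K ↔ p ∈ I) := by
        intro i p hp
        have hpQ : p ∉ Q := fun hq => hHQ i p hq hp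
        constructor
        · exact fun h => hKI h
        · intro h
          by_contra hnK
          exact hpQ (hIK ⟨h, hnK⟩)
      show (∀ i, Formula.Sat K (Formula.reduct I (g i))) ↔ _
      refine forall_congr' fun i => ?_
      have hsati : Formula.Sat I (g i) := hsat i
      rw [hgi i] at hsati ⊢
      rw [Formula.aux_sat_reduct_rule hKI (hKH i) hsati]
      rw [Formula.aux_sat_congr (hagree i)]
    constructor
    · rintro ⟨hsat, hmin⟩
      have hsatI : Formula.Sat I (Formula.conj ι g) :=
        (Formula.aux_sat_reduct (fun p _ => Iff.rfl)).mp hsat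
      have hMI : M ⊆ I ∩ Q := by
        refine hMmin _ Set.inter_subset_right ?_
        intro i h1 h2
        refine ⟨hsatG.mp hsatI i h1 (fun p hp => (h2 hp).1), hqQ i⟩
      have hKI : J ∪ M ⊆ I := Set.union_subset hJI (hMI.trans Set.inter_subset_left)
      have hIK : I \ (J ∪ M) ⊆ Q := by
        intro p hp
        by_contra hpQ
        exact hp.2 (Or.inl ((hoffQ p hpQ).mp hp.1))
      refine (hmin (J ∪ M) hKI hIK ?_).symm
      rw [hredchar (J ∪ M) hKI hIK hsatI]
      intro i h1 h2
      have hCM : C i ⊆ M := by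
        intro p hp
        rcases h2 hp with h | h
        · exact absurd (hCQ i hp) (Set.disjoint_left.mp hJ h)
        · exact h
      exact Or.inr (hMclosed i h1 hCM)
    · rintro rfl
      have hsatI : Formula.Sat (J ∪ M) (Formula.conj ι g) := by
        rw [hsatG]
        intro i h1 h2
        have hCM : C i ⊆ M := by
          intro p hp
          rcases h2 hp with h | h
          · exact absurd (hCQ i hp) (Set.disjoint_left.mp hJ h)
          · exact h
        exact Or.inr (hMclosed i h1 hCM)
      refine ⟨(Formula.aux_sat_reduct (fun p _ => Iff.rfl)).mpr hsatI, ?_⟩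
      intro K hKI hIK hsat
      have hJK : J ⊆ K := by
        intro p hp
        by_contra hnK
        exact Set.disjoint_left.mp hJ hp (hIK ⟨Or.inl hp, hnK⟩)
      rw [hredchar K hKI hIK hsatI] at hsat
      have hMK : M ⊆ K ∩ Q := by
        refine hMmin _ Set.inter_subset_right ?_
        intro i h1 h2
        exact ⟨hsat i h1 (fun p hp => (h2 hp).1), hqQ i⟩
      exact Set.Subset.antisymm hKI
        (Set.union_subset hJK (hMK.trans Set.inter_subset_left))
  have hdiff : (J ∪ M) \ Q = J := by
    ext p
    simp only [Set.mem_diff, Set.mem_union]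
    constructor
    · rintro ⟨h | h, hn⟩
      · exact h
      · exact absurd (hMQ h) hn
    · exact fun h => ⟨Or.inl h, fun hq => Set.disjoint_left.mp hJ h hq⟩
  refine ⟨J ∪ M, ⟨(key _ hdiff).mpr rfl, hdiff⟩, ?_⟩
  rintro I ⟨hst, hIQ⟩
  exact (key I hIQ).mp hst
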